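/- Let c be an exclusive cycle in a directed graph E, v ∈ c⁰, and N_c = M(X) the graded module over L_K(E) built from the reduced branching system X based at v. For any pq* ∈ Y with s(p) ∈ c⁰, the action satisfies p* · red(pq*) = q* in N_c. -/

import Mathlib

/-- A directed graph with vertex set `V`, edge set `E`, source map `s` and range map `r`. -/
structure DiGraph where
  V : Type
  E : Type
  s : E → V
  r : E → V

namespace DiGraph

variable (G : DiGraph)

/-- There is an edge from `u` to `w`. -/
def Step (u w : G.V) : Prop := ∃ e : G.E, G.s e = u ∧ G.r e = w

/-- `G.Reach u w` means `u ≥ w`: there is a (possibly trivial) directed path from `u` to `w`. -/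
def Reach (u w : G.V) : Prop := Relation.ReflTransGen G.Step u w

/-- The root `R(W)` of a set of vertices `W`. -/
def root (W : Set G.V) : Set G.V := {u | ∃ w ∈ W, G.Reach u w}

/-- A set `H` of vertices is hereditary if `u ∈ H` and `u ≥ w` imply `w ∈ H`. -/
def Hereditary (H : Set G.V) : Prop := ∀ u ∈ H, ∀ w, G.Reach u w → w ∈ H

/-- A vertex is regular if it emits at least one and only finitely many edges. -/
def Regular (v : G.V) : Prop := (G.s ⁻¹' {v}).Nonempty ∧ (G.s ⁻¹' {v}).Finite

/-- A set `H` is saturated if every regular vertex all of whose out-edges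
have ranges in `H` lies in `H`. -/
def Saturated (H : Set G.V) : Prop :=
  ∀ v, G.Regular v → (∀ e, G.s e = v → G.r e ∈ H) → v ∈ H

/-- A set of vertices is downwards directed if every two of its elements have a
common lower bound in it. -/
def DownDirected (W : Set G.V) : Prop :=
  ∀ u ∈ W, ∀ v ∈ W, ∃ w ∈ W, G.Reach u w ∧ G.Reach v w

/-- The Countable Separation Property of a set of vertices. -/
def CSP (W : Set G.V) : Prop := ∃ C : Set G.V, C.Countable ∧ W ⊆ G.root C

/-- The Inner Countable Separation Property of a set of vertices. -/
def ICSP (W : Set G.V) : Prop := ∃ C : Set G.V, C.Countable ∧ C ⊆ W ∧ W ⊆ G.root C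

/-- `G.IsPathFrom v l` : the list of edges `l` forms a directed path starting at `v`. -/
def IsPathFrom : (G : DiGraph) → G.V → List G.E → Prop
  | _, _, [] => True
  | G, v, e :: es => G.s e = v ∧ G.IsPathFrom (G.r e) es

/-- The end (range) vertex of a path `l` starting at `v`. -/
def pathEnd : (G : DiGraph) → G.V → List G.E → G.V
  | _, v, [] => v
  | G, _, e :: es => G.pathEnd (G.r e) es

/-- The set of vertices on a path `l` starting at `v`. -/
def pathVerts (v : G.V) (l : List G.E) : Set G.V := insert v {w | ∃ e ∈ l, G.r e = w}

/-- A cycle based at `v` : a nonempty closed path in which distinct edges have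
distinct sources. -/
def IsCycle (v : G.V) (l : List G.E) : Prop :=
  l ≠ [] ∧ G.IsPathFrom v l ∧ G.pathEnd v l = v ∧ (l.map G.s).Nodup

/-- A cycle is exclusive if no vertex on it is the base of a cycle distinct from it
(cycles being identified with their sets of edges). -/
def ExclusiveCycle (v : G.V) (l : List G.E) : Prop :=
  G.IsCycle v l ∧ ∀ u ∈ G.pathVerts v l, ∀ m, G.IsCycle u m → (∀ e, e ∈ m ↔ e ∈ l)

open Classical in
/-- Auxiliary reduction on reversed edge lists: cancel common initial segments. -/
noncomputable def redAux (G : DiGraph) : List G.E → List G.E → List G.E × List G.E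
  | a :: as, b :: bs => if a = b then redAux G as bs else (a :: as, b :: bs)
  | as, bs => (as, bs)

/-- The reduction function: `red (p, q)` cancels the common final edges of the
paths `p` and `q`, implementing `red(ee*q*) = q*` and `red(pee*q*) = red(pq*)`. -/
noncomputable def red (p q : List G.E) : List G.E × List G.E :=
  ((G.redAux p.reverse q.reverse).1.reverse, (G.redAux p.reverse q.reverse).2.reverse)

/-- The source vertex of an element `pq*` (with `q` a path starting at the base
vertex `v`): the source of `p` if `p` is nonempty, and `r(q)` otherwise. -/
def startVtx (v : G.V) : List G.E × List G.E → G.V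
  | ([], q) => G.pathEnd v q
  | (e :: _, _) => G.s e

/-- Membership in the set `Y` associated to a cycle `c` (based at `cv`, with edges
`cl`) and a vertex `v ∈ c⁰`: pairs `(p, q)` of paths with `r(p) = r(q) ∈ c⁰` and
`s(q) = v`. -/
def MemY (cv : G.V) (cl : List G.E) (v : G.V) (x : List G.E × List G.E) : Prop :=
  G.IsPathFrom (G.startVtx v x) x.1 ∧ G.IsPathFrom v x.2 ∧
    G.pathEnd (G.startVtx v x) x.1 = G.pathEnd v x.2 ∧
    G.pathEnd v x.2 ∈ G.pathVerts cv cl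

/-- The degree `|p| − |q|` of an element `pq*`. -/
def degOf (G : DiGraph) (x : List G.E × List G.E) : ℤ :=
  (x.1.length : ℤ) - (x.2.length : ℤ)

/-- The branching system `X`: reduced elements of `Y`. -/
def Xset (cv : G.V) (cl : List G.E) (v : G.V) : Set (List G.E × List G.E) :=
  {x | G.MemY cv cl v x ∧ G.red x.1 x.2 = x}

/-- The subset `X_w` of `X` of elements with source vertex `w`. -/
def Xvtx (cv : G.V) (cl : List G.E) (v : G.V) (w : G.V) : Set (List G.E × List G.E) :=
  {x ∈ G.Xset cv cl v | G.startVtx v x = w}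

/-- The subset `X_e` of `X` of elements of the form `red(e r s*)` with `e r s* ∈ Y`. -/
def Xedge (cv : G.V) (cl : List G.E) (v : G.V) (e : G.E) : Set (List G.E × List G.E) :=
  {x | ∃ rs : List G.E × List G.E, G.MemY cv cl v (e :: rs.1, rs.2) ∧
    x = G.red (e :: rs.1) rs.2}

/-- The map `σ_e : X_{r(e)} → X_e`, `pq* ↦ red(e p q*)`. -/
noncomputable def sigmaE (e : G.E) (x : List G.E × List G.E) : List G.E × List G.E :=
  G.red (e :: x.1) x.2

end DiGraph

noncomputable section
open Classical

variable (K : Type) [Field K] (G : DiGraph)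

/-- Generators of the Leavitt path algebra: vertices, edges and ghost edges. -/
abbrev LVGen (G : DiGraph) : Type := G.V ⊕ G.E ⊕ G.E

/-- The free algebra on the generators. -/
abbrev LFree : Type := FreeAlgebra K (LVGen G)

/-- Vertex generator. -/
def fv (v : G.V) : LFree K G := FreeAlgebra.ι K (Sum.inl v)
/-- Edge generator. -/
def fe (e : G.E) : LFree K G := FreeAlgebra.ι K (Sum.inr (Sum.inl e))
/-- Ghost edge generator. -/
def fg (e : G.E) : LFree K G := FreeAlgebra.ι K (Sum.inr (Sum.inr e))

/-- The defining relations of the Leavitt path algebra: the path algebra relations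
(V), (E) together with (CK1) and (CK2). -/
inductive LRel : LFree K G → LFree K G → Prop
  | vv : ∀ {v w : G.V}, v ≠ w → LRel (fv K G v * fv K G w) 0
  | v_idem : ∀ v : G.V, LRel (fv K G v * fv K G v) (fv K G v)
  | se : ∀ e : G.E, LRel (fv K G (G.s e) * fe K G e) (fe K G e)
  | er : ∀ e : G.E, LRel (fe K G e * fv K G (G.r e)) (fe K G e)
  | rg : ∀ e : G.E, LRel (fv K G (G.r e) * fg K G e) (fg K G e)
  | gs : ∀ e : G.E, LRel (fg K G e * fv K G (G.s e)) (fg K G e)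
  | ck1 : ∀ {e f : G.E}, e ≠ f → LRel (fg K G e * fe K G f) 0
  | ck1e : ∀ e : G.E, LRel (fg K G e * fe K G e) (fv K G (G.r e))
  | ck2 : ∀ (v : G.V) (h : (G.s ⁻¹' {v}).Finite), (G.s ⁻¹' {v}).Nonempty →
      LRel (fv K G v) (∑ e ∈ h.toFinset, fe K G e * fg K G e)

/-- The Leavitt path algebra `L_K(E)` of `G` over `K`. -/
abbrev LPA : Type := RingQuot (LRel K G)

/-- The image of a vertex in `L_K(E)`. -/
def lv (v : G.V) : LPA K G := RingQuot.mkAlgHom K (LRel K G) (fv K G v)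
/-- The image of an edge in `L_K(E)`. -/
def le (e : G.E) : LPA K G := RingQuot.mkAlgHom K (LRel K G) (fe K G e)
/-- The image of a ghost edge in `L_K(E)`. -/
def lg (e : G.E) : LPA K G := RingQuot.mkAlgHom K (LRel K G) (fg K G e)

/-- The element of `L_K(E)` associated to a path `p` (a list of edges). -/
def pProd (p : List G.E) : LPA K G := (p.map (le K G)).prod
/-- The element `q*` of `L_K(E)` associated to a path `q`. -/
def gProd (q : List G.E) : LPA K G := (q.reverse.map (lg K G)).prod

/-- The set of monomials `pq*` of degree `n` in `L_K(E)`. -/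
def MonSet (n : ℤ) : Set (LPA K G) :=
  {x | ∃ (u w : G.V) (p q : List G.E), G.IsPathFrom u p ∧ G.IsPathFrom w q ∧
    G.pathEnd u p = G.pathEnd w q ∧ (p.length : ℤ) - (q.length : ℤ) = n ∧
    x = lv K G u * pProd K G p * gProd K G q}

/-- The degree-`n` homogeneous component of `L_K(E)`: the `K`-linear span of the
monomials `pq*` with `|p| − |q| = n`. -/
def lpaComp (n : ℤ) : Submodule K (LPA K G) := Submodule.span K (MonSet K G n)

/-- A homogeneous element of `L_K(E)`. -/
def LHomog (x : LPA K G) : Prop := ∃ n : ℤ, x ∈ lpaComp K G n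

/-- The free `K`-module on the set of pairs `(p, q)`; the module `N_c = M(X)` is
the span of the basis elements indexed by `X`. -/
abbrev MFree : Type := (List G.E × List G.E) →₀ K

/-- The action of a vertex `w` on a basis element `pq*`:
`w · pq* = pq*` if `s(p) = w`, else `0`. -/
def vAct (v w : G.V) (x : List G.E × List G.E) : MFree K G :=
  if G.startVtx v x = w then Finsupp.single x 1 else 0

/-- The action of an edge `f` on a basis element `pq*`:
`f · pq* = red(f p q*)` if `s(p) = r(f)`, else `0`. -/
def eAct (v : G.V) (f : G.E) (x : List G.E × List G.E) : MFree K G :=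
  if G.startVtx v x = G.r f then Finsupp.single (G.red (f :: x.1) x.2) 1 else 0

/-- The action of a ghost edge `f*` on a basis element `pq*`:
`f* · pq* = σ_f⁻¹(pq*)` if `pq* ∈ X_f`, else `0`. -/
def gAct (v : G.V) (cl : List G.E) (f : G.E) (x : List G.E × List G.E) : MFree K G :=
  match x with
  | (e :: t, q) => if e = f then Finsupp.single (t, q) 1 else 0
  | ([], q) => if f ∈ cl ∧ G.s f = G.pathEnd v q then Finsupp.single ([], q ++ [f]) 1
      else 0

/-- Linear extension of an action on basis elements to the whole module. -/
def actM (F : List G.E × List G.E → MFree K G) (m : MFree K G) : MFree K G :=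
  m.sum fun x k => k • F x

/-- The action of `p* = eₙ* ⋯ e₁*` for a path `p = e₁ ⋯ eₙ`, applying `e₁*` first:
`(ep)* · x = p* · (e* · x)`. -/
def gPathAct (v : G.V) (cl : List G.E) : List G.E → MFree K G → MFree K G
  | [], m => m
  | e :: t, m => gPathAct v cl t (actM K G (gAct K G v cl e) m)


namespace DiGraph

variable {G : DiGraph}

@[simp] theorem pathEnd_nil {u : G.V} : G.pathEnd u [] = u := by simp [pathEnd]

@[simp] theorem pathEnd_cons {u : G.V} {e : G.E} {l : List G.E} :
    G.pathEnd u (e :: l) = G.pathEnd (G.r e) l := by simp [pathEnd]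

@[simp] theorem isPathFrom_nil {u : G.V} : G.IsPathFrom u [] := by simp [IsPathFrom]

@[simp] theorem isPathFrom_cons {u : G.V} {e : G.E} {l : List G.E} :
    G.IsPathFrom u (e :: l) ↔ G.s e = u ∧ G.IsPathFrom (G.r e) l := by simp [IsPathFrom]

theorem isPathFrom_append {u : G.V} {l₁ l₂ : List G.E} :
    G.IsPathFrom u (l₁ ++ l₂) ↔ G.IsPathFrom u l₁ ∧ G.IsPathFrom (G.pathEnd u l₁) l₂ := by
  induction l₁ generalizing u with
  | nil => simp
  | cons e t ih => simp [ih, and_assoc]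

theorem pathEnd_append {u : G.V} {l₁ l₂ : List G.E} :
    G.pathEnd u (l₁ ++ l₂) = G.pathEnd (G.pathEnd u l₁) l₂ := by
  induction l₁ generalizing u with
  | nil => simp
  | cons e t ih => simp [ih]

theorem range_mem_pathVerts {cv : G.V} {cl : List G.E} {e : G.E}
    (he : e ∈ cl) : G.r e ∈ G.pathVerts cv cl := by
  simp only [pathVerts, Set.mem_insert_iff, Set.mem_setOf_eq]
  exact Or.inr ⟨e, he, rfl⟩

theorem cycle_reach {cv : G.V} {cl : List G.E} (hc : G.IsCycle cv cl)
    {w u' : G.V} (hw : w ∈ G.pathVerts cv cl) (hu : u' ∈ G.pathVerts cv cl) :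
    ∃ d, G.IsPathFrom w d ∧ G.pathEnd w d = u' := by
  obtain ⟨hne, hp, hend, hnd⟩ := hc
  have key : ∀ z ∈ G.pathVerts cv cl, ∃ a a', cl = a ++ a' ∧ G.pathEnd cv a = z := by
    intro z hz
    simp only [pathVerts, Set.mem_insert_iff, Set.mem_setOf_eq] at hz
    rcases hz with rfl | ⟨e, he, rfl⟩
    · exact ⟨[], cl, rfl, by simp⟩
    · obtain ⟨s', t', rfl⟩ := List.append_of_mem he
      refine ⟨s' ++ [e], t', by simp, ?_⟩
      rw [pathEnd_append]; simp
  obtain ⟨a, a', ha, hwa⟩ := key w hw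
  obtain ⟨b, b', hb, hub⟩ := key u' hu
  have hpa : G.IsPathFrom cv (a ++ a') := by rw [← ha]; exact hp
  have hpb : G.IsPathFrom cv (b ++ b') := by rw [← hb]; exact hp
  rw [isPathFrom_append] at hpa hpb
  have henda : G.pathEnd w a' = cv := by
    rw [← hwa, ← pathEnd_append, ← ha, hend]
  refine ⟨a' ++ b, ?_, ?_⟩
  · rw [isPathFrom_append, henda]
    exact ⟨hwa ▸ hpa.2, hpb.1⟩
  · rw [pathEnd_append, henda, hub]

theorem sublist_pair_decomp {α : Type} {x y : α} :
    ∀ {l : List α}, List.Sublist [x, y] l → ∃ l₁ l₂ l₃, l = l₁ ++ x :: l₂ ++ y :: l₃ := by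
  intro l
  induction l with
  | nil => intro h; exact absurd h.length_le (by simp)
  | cons a t ih =>
    intro h
    cases h with
    | cons _ h' =>
      obtain ⟨l₁, l₂, l₃, rfl⟩ := ih h'
      exact ⟨a :: l₁, l₂, l₃, rfl⟩
    | cons_cons _ h' =>
      obtain ⟨s, t', rfl⟩ := List.append_of_mem (List.singleton_sublist.mp h')
      exact ⟨[], s, t', rfl⟩

theorem exists_dup_decomp {μ : List G.E} (h : ¬ (μ.map G.s).Nodup) :
    ∃ l₁ x l₂ y l₃, μ = l₁ ++ x :: l₂ ++ y :: l₃ ∧ G.s x = G.s y := by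
  obtain ⟨a, ha⟩ := List.exists_duplicate_iff_not_nodup.mpr h
  obtain ⟨l', hsub, heq⟩ := List.sublist_map_iff.mp (List.duplicate_iff_sublist.mp ha)
  rcases l' with _ | ⟨x, _ | ⟨y, _ | ⟨z, l⟩⟩⟩ <;> simp at heq
  obtain ⟨l₁, l₂, l₃, rfl⟩ := sublist_pair_decomp hsub
  exact ⟨l₁, x, l₂, y, l₃, rfl, by rw [← heq.1, ← heq.2]⟩

theorem exists_cycle_head :
    ∀ (n : ℕ) (μ : List G.E) (u : G.V) (f : G.E) (rest : List G.E),
      μ.length ≤ n → μ = f :: rest → G.IsPathFrom u μ → G.pathEnd u μ = u →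
      ∃ m, G.IsCycle u m ∧ f ∈ m := by
  intro n
  induction n with
  | zero => intro μ u f rest h heq; simp [heq] at h
  | succ n ih =>
    intro μ u f rest hlen heq hp hend
    by_cases hnd : (μ.map G.s).Nodup
    · exact ⟨μ, ⟨by simp [heq], hp, hend, hnd⟩, by simp [heq]⟩
    · obtain ⟨l₁, x, l₂, y, l₃, hdec, hxy⟩ := exists_dup_decomp hnd
      subst heq
      rw [hdec] at hp hend hlen
      rw [isPathFrom_append, isPathFrom_cons] at hp
      obtain ⟨hleft, hsy, hpy⟩ := hp
      rw [isPathFrom_append, isPathFrom_cons] at hleft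
      obtain ⟨hpl₁, hsx, hpl₂⟩ := hleft
      rw [pathEnd_append, pathEnd_cons] at hend
      rw [pathEnd_append, pathEnd_cons] at hsy
      simp only [List.length_append, List.length_cons] at hlen
      cases l₁ with
      | nil =>
        have hfx : f = x := by
          have := hdec
          simp only [List.nil_append, List.cons_append, List.cons.injEq] at this
          exact this.1
        subst hfx
        refine ih (f :: l₂) u f l₂
          (by simp only [List.length_cons, List.length_append, List.length_nil] at hlen ⊢; omega) rfl ?_ ?_
        · rw [isPathFrom_cons]
          exact ⟨by simpa using hsx, hpl₂⟩
        · rw [pathEnd_cons, ← hsy, ← hxy]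
          simpa using hsx
      | cons g l₁' =>
        have hfg : f = g := by
          have := hdec
          simp only [List.cons_append, List.cons.injEq] at this
          exact this.1
        subst hfg
        refine ih (f :: (l₁' ++ y :: l₃)) u f (l₁' ++ y :: l₃)
          (by simp only [List.length_cons, List.length_append] at hlen ⊢; omega) rfl ?_ ?_
        · have : G.IsPathFrom u ((f :: l₁') ++ y :: l₃) :=
            isPathFrom_append.mpr ⟨hpl₁, isPathFrom_cons.mpr ⟨by rw [← hxy]; exact hsx, hpy⟩⟩
          simpa using this
        · have : G.pathEnd u ((f :: l₁') ++ y :: l₃) = u := by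
            rw [pathEnd_append, pathEnd_cons]
            exact hend
          simpa using this

theorem edges_mem_cycle {cv : G.V} {cl : List G.E} (hc : G.ExclusiveCycle cv cl) :
    ∀ (m : List G.E) (u : G.V), u ∈ G.pathVerts cv cl → G.IsPathFrom u m →
      G.pathEnd u m ∈ G.pathVerts cv cl → ∀ f ∈ m, f ∈ cl := by
  intro m
  induction m with
  | nil => simp
  | cons e t ih =>
    intro u hu hp hend f hf
    rw [isPathFrom_cons] at hp
    have he : e ∈ cl := by
      by_contra hecl
      obtain ⟨d, hd, hdend⟩ := cycle_reach hc.1 hend hu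
      have hp2 : G.IsPathFrom u ((e :: t) ++ d) := by
        rw [isPathFrom_append]
        exact ⟨by rw [isPathFrom_cons]; exact hp, by rwa [pathEnd_cons] at hd ⊢⟩
      have hend2 : G.pathEnd u ((e :: t) ++ d) = u := by
        rw [pathEnd_append, hdend]
      obtain ⟨mc, hmc, hemc⟩ :=
        exists_cycle_head ((e :: t) ++ d).length ((e :: t) ++ d) u e (t ++ d)
          le_rfl (by simp) hp2 hend2
      exact hecl ((hc.2 u hu mc hmc e).mp hemc)
    rcases List.mem_cons.mp hf with rfl | hf'
    · exact he
    · exact ih (G.r e) (range_mem_pathVerts he) hp.2 (by rwa [pathEnd_cons] at hend) f hf'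

theorem redAux_decomp (G : DiGraph) :
    ∀ (l₁ l₂ : List G.E), ∃ t, l₁ = t ++ (G.redAux l₁ l₂).1 ∧ l₂ = t ++ (G.redAux l₁ l₂).2 := by
  intro l₁
  induction l₁ with
  | nil => intro l₂; exact ⟨[], by simp [redAux], by simp [redAux]⟩
  | cons a as ih =>
    intro l₂
    cases l₂ with
    | nil => exact ⟨[], by simp [redAux], by simp [redAux]⟩
    | cons b bs =>
      by_cases hab : a = b
      · subst hab
        obtain ⟨t, h1, h2⟩ := ih bs
        have hr : G.redAux (a :: as) (a :: bs) = G.redAux as bs := by simp [redAux]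
        refine ⟨a :: t, ?_, ?_⟩
        · rw [hr, List.cons_append, ← h1]
        · rw [hr, List.cons_append, ← h2]
      · exact ⟨[], by simp [redAux, hab], by simp [redAux, hab]⟩

theorem red_decomp (G : DiGraph) (p q : List G.E) :
    ∃ s, p = (G.red p q).1 ++ s ∧ q = (G.red p q).2 ++ s := by
  obtain ⟨t, h1, h2⟩ := redAux_decomp G p.reverse q.reverse
  refine ⟨t.reverse, ?_, ?_⟩
  · conv_lhs => rw [← p.reverse_reverse, h1]
    simp [red]
  · conv_lhs => rw [← q.reverse_reverse, h2]
    simp [red]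

end DiGraph

theorem actM_single (F : List G.E × List G.E → MFree K G) (x : List G.E × List G.E) :
    actM K G F (Finsupp.single x 1) = F x := by
  rw [actM, Finsupp.sum_single_index (by simp), one_smul]

theorem gPathAct_consume (v : G.V) (cl : List G.E) :
    ∀ (a m q : List G.E),
      gPathAct K G v cl (a ++ m) (Finsupp.single (a, q) 1) =
        gPathAct K G v cl m (Finsupp.single (([] : List G.E), q) 1) := by
  intro a
  induction a with
  | nil => intro m q; rfl
  | cons e t ih =>
    intro m q
    rw [List.cons_append, gPathAct, actM_single]
    have hg : gAct K G v cl e (e :: t, q) = Finsupp.single (t, q) 1 := by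
      simp [gAct]
    rw [hg, ih]

theorem gPathAct_append (v : G.V) (cl : List G.E) :
    ∀ (m q : List G.E), G.IsPathFrom v (q ++ m) → (∀ f ∈ m, f ∈ cl) →
      gPathAct K G v cl m (Finsupp.single (([] : List G.E), q) 1) =
        Finsupp.single (([] : List G.E), q ++ m) 1 := by
  intro m
  induction m with
  | nil => intro q _ _; simp [gPathAct]
  | cons f t ih =>
    intro q hpath hcl
    have hsf : G.s f = G.pathEnd v q := by
      have := (DiGraph.isPathFrom_append.mp hpath).2
      rw [DiGraph.isPathFrom_cons] at this
      exact this.1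
    rw [gPathAct, actM_single]
    have hg : gAct K G v cl f ([], q) = Finsupp.single (([] : List G.E), q ++ [f]) 1 := by
      simp [gAct, hcl f (by simp), hsf]
    rw [hg]
    have hrw : q ++ f :: t = (q ++ [f]) ++ t := by simp
    have := ih (q ++ [f]) (by rw [← hrw]; exact hpath) (fun g hg' => hcl g (by simp [hg']))
    rw [this, ← hrw]

/-- For `pq* ∈ Y` with `s(p) ∈ c⁰`, the action on `N_c` satisfies
`p* · red(pq*) = q*`. -/
theorem gPathAct_red (cv : G.V) (cl : List G.E)
    (hc : G.ExclusiveCycle cv cl) (v : G.V) (hv : v ∈ G.pathVerts cv cl)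
    (x : List G.E × List G.E) (hx : G.MemY cv cl v x)
    (hs : G.startVtx v x ∈ G.pathVerts cv cl) :
    gPathAct K G v cl x.1 (Finsupp.single (G.red x.1 x.2) 1) =
      Finsupp.single (([] : List G.E), x.2) 1 := by
  obtain ⟨p, q⟩ := x
  obtain ⟨hp, hq, hend, hmem⟩ := hx
  obtain ⟨sfx, hps, hqs⟩ := DiGraph.red_decomp G p q
  have hqcl : ∀ f ∈ q, f ∈ cl := DiGraph.edges_mem_cycle hc q v hv hq hmem
  have hscl : ∀ f ∈ sfx, f ∈ cl := fun f hf => hqcl f (by rw [hqs]; simp [hf])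
  have e1 : gPathAct K G v cl p (Finsupp.single (G.red p q) 1) =
      gPathAct K G v cl ((G.red p q).1 ++ sfx)
        (Finsupp.single ((G.red p q).1, (G.red p q).2) 1) := by
    rw [← hps]
  rw [e1, gPathAct_consume, gPathAct_append K G v cl sfx (G.red p q).2
    (by rw [← hqs]; exact hq) hscl, ← hqs]


end
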